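/- (Azzalini's lemma) For any real constants q, μ, σ > 0, and c: ∫_{-∞}^{∞} Φ(qη + c) · (1/√(2πσ²)) exp(-(η-μ)²/(2σ²)) dη = Φ((qμ + c)/√(1 + q²σ²)), where Φ is the standard normal cdf. -/

import Mathlib

open MeasureTheory Real Set

noncomputable def stdPdf (x : ℝ) : ℝ := Real.exp (-(x^2)/2) / Real.sqrt (2 * Real.pi)

noncomputable def stdCdf (x : ℝ) : ℝ := ∫ t in Set.Iic x, stdPdf t

lemma stdPdf_nonneg (x : ℝ) : 0 ≤ stdPdf x := by
  unfold stdPdf; positivity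

lemma stdPdf_continuous : Continuous stdPdf := by
  unfold stdPdf; fun_prop

lemma stdPdf_integrable : Integrable stdPdf := by
  have h := integrable_exp_neg_mul_sq (by norm_num : (0:ℝ) < 1/2)
  have : stdPdf = fun x => Real.exp (-(1/2) * x^2) / Real.sqrt (2*Real.pi) := by
    funext x; unfold stdPdf; ring_nf
  rw [this]
  exact h.div_const _

lemma stdCdf_nonneg (x : ℝ) : 0 ≤ stdCdf x :=
  setIntegral_nonneg measurableSet_Iic fun t _ => stdPdf_nonneg t

lemma stdCdf_le (x : ℝ) : stdCdf x ≤ ∫ t, stdPdf t :=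
  setIntegral_le_integral stdPdf_integrable (Filter.Eventually.of_forall stdPdf_nonneg)

lemma stdCdf_mono : Monotone stdCdf := fun _x _y hxy =>
  setIntegral_mono_set stdPdf_integrable.integrableOn
    (Filter.Eventually.of_forall stdPdf_nonneg) (HasSubset.Subset.eventuallyLE (Iic_subset_Iic.2 hxy))

lemma shiftIic (f : ℝ → ℝ) (a c : ℝ) :
    ∫ u in Iic c, f (u + a) = ∫ t in Iic (c + a), f t := by
  rw [← integral_indicator measurableSet_Iic, ← integral_indicator measurableSet_Iic,
      ← integral_add_right_eq_self (fun t => (Iic (c+a)).indicator f t) a]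
  congr 1; funext u
  simp [Set.indicator_apply, add_le_add_iff_right]

lemma scaleIic (f : ℝ → ℝ) {τ : ℝ} (hτ : 0 < τ) (c : ℝ) :
    ∫ u in Iic c, f (u / τ) = τ * ∫ v in Iic (c / τ), f v := by
  rw [← integral_indicator measurableSet_Iic, ← integral_indicator measurableSet_Iic]
  have h := MeasureTheory.Measure.integral_comp_div (fun t => (Iic (c/τ)).indicator f t) τ
  have h2 : (fun x : ℝ => (Iic (c/τ)).indicator f (x / τ))
      = fun x : ℝ => (Iic c).indicator (fun u => f (u / τ)) x := by
    funext x
    simp only [Set.indicator_apply, mem_Iic]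
    exact if_congr (div_le_div_iff_of_pos_right hτ) rfl rfl
  rw [h2] at h
  rw [h, abs_of_pos hτ, smul_eq_mul]

lemma inner_int (q μ σ u : ℝ) (hσ : 0 < σ) :
    ∫ η : ℝ, (Real.exp (-((u + q*η)^2)/2) / Real.sqrt (2 * Real.pi)) *
        ((1 / Real.sqrt (2 * Real.pi * σ^2)) * Real.exp (-(η - μ)^2 / (2*σ^2)))
    = (1 / Real.sqrt (2 * Real.pi * (1 + q^2*σ^2))) *
        Real.exp (-(u + q*μ)^2 / (2*(1 + q^2*σ^2))) := by
  have hσ2 : (0:ℝ) < σ^2 := by positivity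
  have hτ2 : (0:ℝ) < 1 + q^2*σ^2 := by positivity
  set A : ℝ := (1 + q^2*σ^2)/(2*σ^2) with hA
  have hApos : 0 < A := by positivity
  set m : ℝ := (μ/σ^2 - u*q) / (2*A) with hm
  set D : ℝ := -(u + q*μ)^2/(2*(1 + q^2*σ^2)) with hD
  have key : ∀ η : ℝ, (Real.exp (-((u + q*η)^2)/2) / Real.sqrt (2 * Real.pi)) *
        ((1 / Real.sqrt (2 * Real.pi * σ^2)) * Real.exp (-(η - μ)^2 / (2*σ^2)))
      = (Real.exp D / (Real.sqrt (2*Real.pi) * Real.sqrt (2*Real.pi*σ^2))) *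
        Real.exp (-A * (η - m)^2) := by
    intro η
    have hexp : -((u + q*η)^2)/2 + (-(η - μ)^2 / (2*σ^2)) = D + (-A * (η - m)^2) := by
      rw [hD, hm, hA]
      field_simp
      ring
    calc (Real.exp (-((u + q*η)^2)/2) / Real.sqrt (2 * Real.pi)) *
            ((1 / Real.sqrt (2 * Real.pi * σ^2)) * Real.exp (-(η - μ)^2 / (2*σ^2)))
        = (Real.exp (-((u + q*η)^2)/2) * Real.exp (-(η - μ)^2 / (2*σ^2))) /
            (Real.sqrt (2*Real.pi) * Real.sqrt (2*Real.pi*σ^2)) := by ring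
      _ = Real.exp (D + (-A * (η - m)^2)) /
            (Real.sqrt (2*Real.pi) * Real.sqrt (2*Real.pi*σ^2)) := by
            rw [← Real.exp_add, hexp]
      _ = _ := by rw [Real.exp_add]; ring
  rw [integral_congr_ae (Filter.Eventually.of_forall key)]
  rw [integral_const_mul]
  have hint : ∫ η : ℝ, Real.exp (-A * (η - m)^2) = Real.sqrt (Real.pi / A) := by
    rw [show (fun η : ℝ => Real.exp (-A * (η - m)^2)) = fun η => (fun x => Real.exp (-A * x^2)) (η - m) from rfl]
    rw [integral_sub_right_eq_self (fun x => Real.exp (-A * x^2)) m]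
    exact integral_gaussian A
  rw [hint]
  have hconst : Real.sqrt (Real.pi / A) * Real.sqrt (2*Real.pi*(1 + q^2*σ^2))
      = Real.sqrt (2*Real.pi) * Real.sqrt (2*Real.pi*σ^2) := by
    rw [← Real.sqrt_mul (by positivity), ← Real.sqrt_mul (by positivity)]
    congr 1
    rw [hA]
    field_simp
  set s1 : ℝ := Real.sqrt (2*Real.pi) with hs1
  set s2 : ℝ := Real.sqrt (2*Real.pi*σ^2) with hs2
  set s4 : ℝ := Real.sqrt (2*Real.pi*(1 + q^2*σ^2)) with hs4
  have h1 : s1 ≠ 0 := by rw [hs1]; positivity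
  have h2 : s2 ≠ 0 := by rw [hs2]; positivity
  have h4 : s4 ≠ 0 := by rw [hs4]; positivity
  have h3 : Real.sqrt (Real.pi / A) = s1 * s2 / s4 := by
    rw [eq_div_iff h4]; exact hconst
  rw [h3]
  field_simp

/-- Azzalini's lemma. -/
theorem azzalini_lemma (q c μ σ : ℝ) (hσ : 0 < σ) :
    (∫ η : ℝ, stdCdf (q*η + c) *
        ((1 / Real.sqrt (2 * Real.pi * σ^2)) * Real.exp (-(η - μ)^2 / (2*σ^2))))
    = stdCdf ((q*μ + c) / Real.sqrt (1 + q^2*σ^2)) := by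
  have hτ2 : (0:ℝ) < 1 + q^2*σ^2 := by positivity
  have hτpos : (0:ℝ) < Real.sqrt (1 + q^2*σ^2) := Real.sqrt_pos.2 hτ2
  set g : ℝ → ℝ := fun η => (1 / Real.sqrt (2*Real.pi*σ^2)) * Real.exp (-(η-μ)^2/(2*σ^2)) with hg
  have hg_nonneg : ∀ η, 0 ≤ g η := by intro η; rw [hg]; positivity
  have hg_cont : Continuous g := by rw [hg]; fun_prop
  have hg_int : Integrable g := by
    rw [hg]
    apply Integrable.const_mul
    have h := (integrable_exp_neg_mul_sq (show (0:ℝ) < 1/(2*σ^2) by positivity)).comp_sub_right μ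
    have heq : (fun η : ℝ => Real.exp (-(η-μ)^2/(2*σ^2)))
        = fun η => Real.exp (-(1/(2*σ^2)) * (η - μ)^2) := by
      funext η; congr 1; field_simp
    rw [heq]
    exact h
  set F : ℝ × ℝ → ℝ := fun p => (Iic c).indicator (fun u => stdPdf (u + q*p.1) * g p.1) p.2 with hF
  have hF_eq : F = Set.indicator {p : ℝ × ℝ | p.2 ≤ c} (fun p => stdPdf (p.2 + q*p.1) * g p.1) := by
    funext p
    by_cases h : p.2 ≤ c <;> simp [hF, Set.indicator_apply, h]
  have hF_meas : AEStronglyMeasurable F (volume.prod volume) := by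
    rw [hF_eq]
    exact (((stdPdf_continuous.comp (by fun_prop)).mul (hg_cont.comp continuous_fst)).measurable.indicator
      (measurable_snd measurableSet_Iic)).aestronglyMeasurable
  have hF_nonneg : ∀ p, 0 ≤ F p := by
    intro p
    rw [hF]
    exact Set.indicator_nonneg (fun u _ => mul_nonneg (stdPdf_nonneg _) (hg_nonneg _)) _
  have hsec : ∀ η : ℝ, Integrable (fun u => F (η, u)) := by
    intro η
    have h1 : Integrable (fun u => stdPdf (u + q*η)) := stdPdf_integrable.comp_add_right (q*η)
    exact ((h1.mul_const (g η)).indicator measurableSet_Iic)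
  have hFint : ∀ η : ℝ, ∫ u, F (η, u) = stdCdf (q*η + c) * g η := by
    intro η
    rw [show (fun u => F (η,u)) = (Iic c).indicator (fun u => stdPdf (u + q*η) * g η) from rfl]
    rw [integral_indicator measurableSet_Iic, integral_mul_const, shiftIic stdPdf (q*η) c,
        add_comm c (q*η)]
    rfl
  have hF_int : Integrable F (volume.prod volume) := by
    rw [integrable_prod_iff hF_meas]
    refine ⟨Filter.Eventually.of_forall hsec, ?_⟩
    have heq : (fun η => ∫ u, ‖F (η, u)‖) = fun η => stdCdf (q*η + c) * g η := by
      funext η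
      rw [show (fun u => ‖F (η,u)‖) = fun u => F (η,u) from
        funext fun u => Real.norm_of_nonneg (hF_nonneg _)]
      exact hFint η
    rw [heq]
    set M : ℝ := ∫ t, stdPdf t with hM
    have hM_nonneg : 0 ≤ M := integral_nonneg stdPdf_nonneg
    apply Integrable.mono (hg_int.const_mul M)
    · exact ((stdCdf_mono.measurable.comp ((measurable_id.const_mul q).add_const c)).mul
        hg_cont.measurable).aestronglyMeasurable
    · refine Filter.Eventually.of_forall fun η => ?_
      rw [Real.norm_of_nonneg (mul_nonneg (stdCdf_nonneg _) (hg_nonneg _)),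
          Real.norm_of_nonneg (mul_nonneg hM_nonneg (hg_nonneg _))]
      exact mul_le_mul_of_nonneg_right (stdCdf_le _) (hg_nonneg _)
  have swap : ∫ η : ℝ, ∫ u : ℝ, F (η, u) = ∫ u : ℝ, ∫ η : ℝ, F (η, u) :=
    integral_integral_swap hF_int
  have step1 : (∫ η : ℝ, stdCdf (q*η + c) *
        ((1 / Real.sqrt (2 * Real.pi * σ^2)) * Real.exp (-(η - μ)^2 / (2*σ^2))))
      = ∫ η : ℝ, ∫ u : ℝ, F (η, u) := by
    apply integral_congr_ae
    exact Filter.Eventually.of_forall fun η => (hFint η).symm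
  set I : ℝ → ℝ := fun u => (1 / Real.sqrt (2 * Real.pi * (1 + q^2*σ^2))) *
        Real.exp (-(u + q*μ)^2 / (2*(1 + q^2*σ^2))) with hI
  have step2 : ∀ u : ℝ, (∫ η : ℝ, F (η, u)) = (Iic c).indicator I u := by
    intro u
    by_cases h : u ≤ c
    · rw [Set.indicator_of_mem (by exact h)]
      have : (fun η => F (η, u)) = fun η => stdPdf (u + q*η) * g η := by
        funext η
        rw [hF]
        simp only
        rw [Set.indicator_of_mem (by exact h)]
      rw [this, hI]
      exact inner_int q μ σ u hσ
    · rw [Set.indicator_of_notMem (by exact h)]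
      have : (fun η => F (η, u)) = fun _ => (0:ℝ) := by
        funext η
        rw [hF]
        simp only
        rw [Set.indicator_of_notMem (by exact h)]
      rw [this, integral_zero]
  have hIeq : ∀ u : ℝ, I u = (fun t => stdPdf (t / Real.sqrt (1 + q^2*σ^2))) (u + q*μ) /
      Real.sqrt (1 + q^2*σ^2) := by
    intro u
    rw [hI]
    simp only
    unfold stdPdf
    rw [div_pow, Real.sq_sqrt hτ2.le,
        Real.sqrt_mul (by positivity : (0:ℝ) ≤ 2*Real.pi)]
    have h : -((u + q*μ)^2/(1 + q^2*σ^2))/2 = -(u + q*μ)^2 / (2*(1 + q^2*σ^2)) := by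
      field_simp
    rw [h]
    ring
  calc (∫ η : ℝ, stdCdf (q*η + c) *
        ((1 / Real.sqrt (2 * Real.pi * σ^2)) * Real.exp (-(η - μ)^2 / (2*σ^2))))
      = ∫ η : ℝ, ∫ u : ℝ, F (η, u) := step1
    _ = ∫ u : ℝ, ∫ η : ℝ, F (η, u) := swap
    _ = ∫ u : ℝ, (Iic c).indicator I u := by
        exact integral_congr_ae (Filter.Eventually.of_forall step2)
    _ = ∫ u in Iic c, I u := integral_indicator measurableSet_Iic
    _ = ∫ u in Iic c, (fun t => stdPdf (t / Real.sqrt (1 + q^2*σ^2))) (u + q*μ) /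
          Real.sqrt (1 + q^2*σ^2) :=
        integral_congr_ae (Filter.Eventually.of_forall fun u => hIeq u)
    _ = (∫ u in Iic c, (fun t => stdPdf (t / Real.sqrt (1 + q^2*σ^2))) (u + q*μ)) /
          Real.sqrt (1 + q^2*σ^2) := integral_div _ _
    _ = (∫ t in Iic (c + q*μ), stdPdf (t / Real.sqrt (1 + q^2*σ^2))) /
          Real.sqrt (1 + q^2*σ^2) := by
        rw [shiftIic (fun t => stdPdf (t / Real.sqrt (1 + q^2*σ^2))) (q*μ) c]
    _ = (Real.sqrt (1 + q^2*σ^2) *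
          ∫ v in Iic ((c + q*μ)/Real.sqrt (1 + q^2*σ^2)), stdPdf v) /
          Real.sqrt (1 + q^2*σ^2) := by
        rw [scaleIic stdPdf hτpos (c + q*μ)]
    _ = stdCdf ((q*μ + c) / Real.sqrt (1 + q^2*σ^2)) := by
        rw [mul_comm, mul_div_assoc, div_self hτpos.ne', mul_one, add_comm c (q*μ)]
        rfl
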